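/- A torsion group (every element has finite order) is hyperbolic if and only if it is finite. -/

import Mathlib

/-- The word length of `g` with respect to a generating set `S`. -/
noncomputable def wordLength {G : Type*} [Group G] (S : Set G) (g : G) : ℕ :=
  sInf {n : ℕ | ∃ w : List G, w.length = n ∧ (∀ x ∈ w, x ∈ S ∨ x⁻¹ ∈ S) ∧ w.prod = g}

/-- The word metric on `G` associated to a generating set `S`. -/
noncomputable def wordDist {G : Type*} [Group G] (S : Set G) (g h : G) : ℝ :=
  (wordLength S (g⁻¹ * h) : ℝ)

/-- A finitely generated group is hyperbolic if its word metric (equivalently, its Cayley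
graph) with respect to some finite generating set satisfies Gromov's four-point
`δ`-hyperbolicity condition for some `δ ≥ 0`. -/
def IsHyperbolicGroup (G : Type*) [Group G] : Prop :=
  ∃ S : Set G, S.Finite ∧ Subgroup.closure S = ⊤ ∧
    ∃ δ : ℝ, 0 ≤ δ ∧ ∀ x y z w : G,
      wordDist S x y + wordDist S z w ≤
        max (wordDist S x z + wordDist S y w) (wordDist S x w + wordDist S y z) + δ

namespace THF
variable {G : Type*} [Group G] {S : Set G}

lemma wl_le {w : List G} (hw : ∀ x ∈ w, x ∈ S ∨ x⁻¹ ∈ S) :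
    wordLength S w.prod ≤ w.length :=
  Nat.sInf_le ⟨w, rfl, hw, rfl⟩

lemma wl_le' {g : G} {w : List G} (hw : ∀ x ∈ w, x ∈ S ∨ x⁻¹ ∈ S) (hp : w.prod = g) :
    wordLength S g ≤ w.length :=
  Nat.sInf_le ⟨w, rfl, hw, hp⟩

lemma wl_spec (hcl : Subgroup.closure S = ⊤) (g : G) :
    ∃ w : List G, w.length = wordLength S g ∧ (∀ x ∈ w, x ∈ S ∨ x⁻¹ ∈ S) ∧ w.prod = g := by
  have hg : g ∈ (Subgroup.closure S).toSubmonoid := by rw [hcl]; trivial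
  rw [Subgroup.closure_toSubmonoid] at hg
  obtain ⟨l, hl, hp⟩ := Submonoid.exists_list_of_mem_closure hg
  have hl' : ∀ x ∈ l, x ∈ S ∨ x⁻¹ ∈ S := by
    intro x hx
    rcases hl x hx with h | h
    · exact Or.inl h
    · exact Or.inr (Set.mem_inv.mp h)
  have hne : {n : ℕ | ∃ w : List G, w.length = n ∧ (∀ x ∈ w, x ∈ S ∨ x⁻¹ ∈ S) ∧ w.prod = g}.Nonempty :=
    ⟨l.length, l, rfl, hl', hp⟩
  exact Nat.sInf_mem hne

lemma wl_one : wordLength S (1 : G) = 0 :=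
  Nat.le_zero.mp (wl_le' (w := []) (by simp) (by simp))

lemma eq_one_of_wl_eq_zero (hcl : Subgroup.closure S = ⊤) {g : G}
    (h : wordLength S g = 0) : g = 1 := by
  obtain ⟨w, hlen, -, hp⟩ := wl_spec hcl g
  rw [h, List.length_eq_zero_iff] at hlen
  rw [← hp, hlen, List.prod_nil]

lemma wl_mul (hcl : Subgroup.closure S = ⊤) (g h : G) :
    wordLength S (g * h) ≤ wordLength S g + wordLength S h := by
  obtain ⟨wg, hg1, hg2, hg3⟩ := wl_spec hcl g
  obtain ⟨wh, hh1, hh2, hh3⟩ := wl_spec hcl h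
  have hlet : ∀ x ∈ wg ++ wh, x ∈ S ∨ x⁻¹ ∈ S := by
    intro x hx; rcases List.mem_append.mp hx with h' | h'
    · exact hg2 x h'
    · exact hh2 x h'
  have hp : (wg ++ wh).prod = g * h := by rw [List.prod_append, hg3, hh3]
  have := wl_le' hlet hp
  simpa [hg1, hh1] using this

lemma wl_inv (hcl : Subgroup.closure S = ⊤) (g : G) :
    wordLength S g⁻¹ = wordLength S g := by
  have key : ∀ a : G, wordLength S a⁻¹ ≤ wordLength S a := by
    intro a
    obtain ⟨w, h1, h2, h3⟩ := wl_spec hcl a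
    have hlet : ∀ x ∈ (w.map (·⁻¹)).reverse, x ∈ S ∨ x⁻¹ ∈ S := by
      intro x hx
      simp only [List.mem_reverse, List.mem_map] at hx
      obtain ⟨y, hy, rfl⟩ := hx
      rcases h2 y hy with h' | h'
      · exact Or.inr (by simpa using h')
      · exact Or.inl h'
    have hp : ((w.map (·⁻¹)).reverse).prod = a⁻¹ := by
      rw [← h3, List.prod_inv_reverse]
    have := wl_le' hlet hp
    simpa [h1] using this
  exact le_antisymm (key g) (by simpa using key g⁻¹)

end THF

namespace THF
open Pointwise
variable {G : Type*} [Group G] {S : Set G}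

lemma letters_finite (hS : S.Finite) : ({x : G | x ∈ S ∨ x⁻¹ ∈ S}).Finite := by
  have : {x : G | x ∈ S ∨ x⁻¹ ∈ S} = S ∪ (Inv.inv ⁻¹' S) := by
    ext x; simp [Set.mem_preimage]
  rw [this]
  exact hS.union (hS.preimage (Set.injOn_of_injective inv_injective))

lemma ball_finite (hS : S.Finite) (hcl : Subgroup.closure S = ⊤) (n : ℕ) :
    {g : G | wordLength S g ≤ n}.Finite := by
  induction n with
  | zero =>
      refine Set.Finite.subset (Set.finite_singleton (1 : G)) ?_
      intro g hg
      simp only [Set.mem_setOf_eq, Nat.le_zero] at hg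
      simp [eq_one_of_wl_eq_zero hcl hg]
  | succ n ih =>
      refine Set.Finite.subset (Set.Finite.insert 1 ((letters_finite hS).mul ih)) ?_
      intro g hg
      simp only [Set.mem_setOf_eq] at hg
      obtain ⟨w, h1, h2, h3⟩ := wl_spec hcl g
      match w, h3 with
      | [], h3 => exact Set.mem_insert_iff.mpr (Or.inl (by simp [← h3]))
      | a :: t, h3 =>
        refine Set.mem_insert_iff.mpr (Or.inr ?_)
        have ha : a ∈ {x : G | x ∈ S ∨ x⁻¹ ∈ S} := h2 a (by simp)
        have ht : t.prod ∈ {g : G | wordLength S g ≤ n} := by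
          have : wordLength S t.prod ≤ t.length := wl_le (fun x hx => h2 x (List.mem_cons_of_mem _ hx))
          have hlen : t.length ≤ n := by
            have := h1; simp only [List.length_cons] at this; omega
          exact le_trans this hlen
        have : g = a * t.prod := by rw [← h3, List.prod_cons]
        rw [this]
        exact Set.mul_mem_mul ha ht

lemma exists_long (hS : S.Finite) (hcl : Subgroup.closure S = ⊤) [Infinite G] (n : ℕ) :
    ∃ g : G, n ≤ wordLength S g := by
  by_contra h
  push_neg at h
  have : (Set.univ : Set G).Finite := by
    refine Set.Finite.subset (ball_finite hS hcl n) ?_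
    intro g _
    exact le_of_lt (h g)
  exact (not_finite_iff_infinite.mpr ‹Infinite G›) (Set.finite_univ_iff.mp this)

/-- Prefix lemma: geodesic prefix of exact length. -/
lemma prefix_ex (hcl : Subgroup.closure S = ⊤) (g : G) (k : ℕ) (hk : k ≤ wordLength S g) :
    ∃ p : G, wordLength S p = k ∧
      wordLength S p + wordLength S (p⁻¹ * g) = wordLength S g := by
  obtain ⟨w, h1, h2, h3⟩ := wl_spec hcl g
  refine ⟨(w.take k).prod, ?_⟩
  have hsplit : (w.take k).prod * (w.drop k).prod = g := by
    rw [← List.prod_append, List.take_append_drop, h3]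
  have hinv : ((w.take k).prod)⁻¹ * g = (w.drop k).prod := by
    rw [← hsplit]; group
  have htk : wordLength S (w.take k).prod ≤ k := by
    have := wl_le (S := S) (w := w.take k)
      (fun x hx => h2 x (List.take_subset _ _ hx))
    have hlen : (w.take k).length = k := by
      rw [List.length_take]; omega
    omega
  have hdk : wordLength S ((w.take k).prod⁻¹ * g) ≤ wordLength S g - k := by
    rw [hinv]
    have := wl_le (S := S) (w := w.drop k)
      (fun x hx => h2 x (List.drop_subset _ _ hx))
    have hlen : (w.drop k).length = wordLength S g - k := by
      rw [List.length_drop]; omega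
    omega
  have htri : wordLength S g ≤ wordLength S (w.take k).prod
      + wordLength S ((w.take k).prod⁻¹ * g) := by
    have := wl_mul hcl (w.take k).prod ((w.take k).prod⁻¹ * g)
    simpa [mul_inv_cancel_left] using this
  omega

end THF

namespace THF
variable {G : Type*} [Group G] {S : Set G}

lemma letter_of_wl_eq_one (hcl : Subgroup.closure S = ⊤) {s : G}
    (h : wordLength S s = 1) : s ∈ S ∨ s⁻¹ ∈ S := by
  obtain ⟨w, h1, h2, h3⟩ := wl_spec hcl s
  rw [h] at h1
  match w, h1, h3 with
  | [x], _, h3 =>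
    have : x = s := by simpa using h3
    exact this ▸ h2 x (by simp)

lemma wl_letter_le_one {s : G} (h : s ∈ S ∨ s⁻¹ ∈ S) : wordLength S s ≤ 1 :=
  wl_le' (w := [s]) (by simpa using h) (by simp)

/-- `g` can be extended geodesically by arbitrary lengths. -/
def Ext (S : Set G) (g : G) : Prop :=
  ∀ k : ℕ, ∃ h : G, wordLength S h = wordLength S g + k ∧ wordLength S (g⁻¹ * h) = k

lemma ext_one (hS : S.Finite) (hcl : Subgroup.closure S = ⊤) [Infinite G] :
    Ext S (1 : G) := by
  intro k
  obtain ⟨x, hx⟩ := exists_long hS hcl (S := S) k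
  obtain ⟨p, hp1, hp2⟩ := prefix_ex hcl x k hx
  exact ⟨p, by simpa [wl_one] using hp1, by simpa using hp1⟩

lemma ext_step (hS : S.Finite) (hcl : Subgroup.closure S = ⊤) {g : G} (hg : Ext S g) :
    ∃ s : G, (s ∈ S ∨ s⁻¹ ∈ S) ∧ wordLength S (g * s) = wordLength S g + 1 ∧ Ext S (g * s) := by
  classical
  have key : ∀ k : ℕ, ∃ s : G, (s ∈ S ∨ s⁻¹ ∈ S) ∧
      wordLength S (g * s) = wordLength S g + 1 ∧
      ∃ h : G, wordLength S h = wordLength S g + 1 + k ∧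
        wordLength S ((g * s)⁻¹ * h) = k := by
    intro k
    obtain ⟨h, hh1, hh2⟩ := hg (k + 1)
    obtain ⟨s, hs1, hs2⟩ := prefix_ex hcl (g⁻¹ * h) 1 (by omega)
    have hsletter := letter_of_wl_eq_one hcl hs1
    have hgs_inv : (g * s)⁻¹ * h = s⁻¹ * (g⁻¹ * h) := by group
    have hsrest : wordLength S ((g * s)⁻¹ * h) = k := by
      rw [hgs_inv]; omega
    have hgs_le : wordLength S (g * s) ≤ wordLength S g + 1 := by
      have := wl_mul hcl g s
      omega
    have hgs_ge : wordLength S g + 1 ≤ wordLength S (g * s) := by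
      have htri : wordLength S h ≤ wordLength S (g * s) + wordLength S ((g * s)⁻¹ * h) := by
        have := wl_mul hcl (g * s) ((g * s)⁻¹ * h)
        rwa [mul_inv_cancel_left] at this
      omega
    exact ⟨s, hsletter, by omega, h, by omega, hsrest⟩
  -- pigeonhole on the letters
  haveI : Finite ↥({x : G | x ∈ S ∨ x⁻¹ ∈ S}) := (letters_finite hS).to_subtype
  let F : ℕ → ↥({x : G | x ∈ S ∨ x⁻¹ ∈ S}) := fun k => ⟨(key k).choose, (key k).choose_spec.1⟩
  obtain ⟨s₀, hfib⟩ := Finite.exists_infinite_fiber F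
  have hfib' : (F ⁻¹' {s₀}).Infinite := by
    rwa [← Set.infinite_coe_iff]
  obtain ⟨k₀, hk₀, -⟩ := hfib'.exists_gt 0
  have hk₀' : (key k₀).choose = (s₀ : G) := congrArg Subtype.val hk₀
  refine ⟨(s₀ : G), s₀.2, ?_, ?_⟩
  · rw [← hk₀']; exact (key k₀).choose_spec.2.1
  · intro m
    obtain ⟨k, hk, hmk⟩ := hfib'.exists_gt m
    have hk' : (key k).choose = (s₀ : G) := congrArg Subtype.val hk
    obtain ⟨-, hlen, h, hh1, hh2⟩ := (key k).choose_spec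
    rw [hk'] at hlen hh2
    set gs := g * (s₀ : G) with hgs
    -- truncate the extension by k to an extension by m
    obtain ⟨v, hv1, hv2⟩ := prefix_ex hcl (gs⁻¹ * h) m (by omega)
    refine ⟨gs * v, ?_, ?_⟩
    · have hle : wordLength S (gs * v) ≤ wordLength S gs + m := by
        have := wl_mul hcl gs v; omega
      have hge : wordLength S gs + m ≤ wordLength S (gs * v) := by
        have htri : wordLength S h ≤ wordLength S (gs * v) + wordLength S ((gs * v)⁻¹ * h) := by
          have := wl_mul hcl (gs * v) ((gs * v)⁻¹ * h)
          rwa [mul_inv_cancel_left] at this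
        have hrest : wordLength S ((gs * v)⁻¹ * h) = wordLength S (gs⁻¹ * h) - m := by
          have : (gs * v)⁻¹ * h = v⁻¹ * (gs⁻¹ * h) := by group
          rw [this]; omega
        omega
      omega
    · have : gs⁻¹ * (gs * v) = v := by group
      rw [this, hv1]

end THF

namespace THF
variable {G : Type*} [Group G]

/-- A geodesic ray in an infinite finitely generated group. -/
noncomputable def ray (S : Set G) (hS : S.Finite) (hcl : Subgroup.closure S = ⊤)
    (hinf : Infinite G) : ℕ → {g : G // Ext S g}
  | 0 => ⟨1, @ext_one G _ S hS hcl hinf⟩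
  | n + 1 =>
      let p := ray S hS hcl hinf n
      ⟨p.1 * (ext_step hS hcl p.2).choose, (ext_step hS hcl p.2).choose_spec.2.2⟩

variable {S : Set G} (hS : S.Finite) (hcl : Subgroup.closure S = ⊤) (hinf : Infinite G)

lemma ray_zero : (ray S hS hcl hinf 0).1 = 1 := rfl

lemma ray_succ_len (n : ℕ) :
    wordLength S (ray S hS hcl hinf (n + 1)).1
      = wordLength S (ray S hS hcl hinf n).1 + 1 :=
  (ext_step hS hcl (ray S hS hcl hinf n).2).choose_spec.2.1

lemma ray_succ_letter (n : ℕ) :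
    wordLength S ((ray S hS hcl hinf n).1⁻¹ * (ray S hS hcl hinf (n + 1)).1) ≤ 1 := by
  have : (ray S hS hcl hinf n).1⁻¹ * (ray S hS hcl hinf (n + 1)).1
      = (ext_step hS hcl (ray S hS hcl hinf n).2).choose := by
    show (ray S hS hcl hinf n).1⁻¹ * ((ray S hS hcl hinf n).1 * _) = _
    group
  rw [this]
  exact wl_letter_le_one (ext_step hS hcl (ray S hS hcl hinf n).2).choose_spec.1

lemma ray_len (n : ℕ) : wordLength S (ray S hS hcl hinf n).1 = n := by
  induction n with
  | zero => simpa [ray_zero] using wl_one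
  | succ n ih => rw [ray_succ_len, ih]

lemma ray_dist (n k : ℕ) :
    wordLength S ((ray S hS hcl hinf n).1⁻¹ * (ray S hS hcl hinf (n + k)).1) = k := by
  have hle : ∀ k, wordLength S ((ray S hS hcl hinf n).1⁻¹ * (ray S hS hcl hinf (n + k)).1) ≤ k := by
    intro k
    induction k with
    | zero => simp [wl_one]
    | succ k ih =>
        have hdecomp : (ray S hS hcl hinf n).1⁻¹ * (ray S hS hcl hinf (n + k + 1)).1
            = ((ray S hS hcl hinf n).1⁻¹ * (ray S hS hcl hinf (n + k)).1)
              * ((ray S hS hcl hinf (n + k)).1⁻¹ * (ray S hS hcl hinf (n + k + 1)).1) := by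
          group
        have := wl_mul hcl ((ray S hS hcl hinf n).1⁻¹ * (ray S hS hcl hinf (n + k)).1)
          ((ray S hS hcl hinf (n + k)).1⁻¹ * (ray S hS hcl hinf (n + k + 1)).1)
        rw [← hdecomp] at this
        have hlet := ray_succ_letter hS hcl hinf (n + k)
        have : wordLength S ((ray S hS hcl hinf n).1⁻¹ * (ray S hS hcl hinf (n + k + 1)).1)
            ≤ k + 1 := by omega
        simpa [Nat.add_assoc] using this
  have hge : n + k ≤ n + wordLength S ((ray S hS hcl hinf n).1⁻¹ * (ray S hS hcl hinf (n + k)).1) := by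
    have htri := wl_mul hcl (ray S hS hcl hinf n).1
      ((ray S hS hcl hinf n).1⁻¹ * (ray S hS hcl hinf (n + k)).1)
    rw [mul_inv_cancel_left] at htri
    have h1 := ray_len hS hcl hinf (n + k)
    have h2 := ray_len hS hcl hinf n
    omega
  have := hle k
  omega

end THF

namespace THF
variable {G : Type*} [Group G] {S : Set G} {δ : ℝ}

lemma wd_nonneg (g h : G) : 0 ≤ wordDist S g h := Nat.cast_nonneg _

lemma wd_symm (hcl : Subgroup.closure S = ⊤) (g h : G) :
    wordDist S g h = wordDist S h g := by
  unfold wordDist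
  rw [show h⁻¹ * g = (g⁻¹ * h)⁻¹ by group, wl_inv hcl]

lemma wd_triangle (hcl : Subgroup.closure S = ⊤) (g h k : G) :
    wordDist S g k ≤ wordDist S g h + wordDist S h k := by
  unfold wordDist
  have := wl_mul hcl (g⁻¹ * h) (h⁻¹ * k)
  rw [show g⁻¹ * h * (h⁻¹ * k) = g⁻¹ * k by group] at this
  exact_mod_cast this

lemma wd_eq (g h : G) : wordDist S g h = (wordLength S (g⁻¹ * h) : ℝ) := rfl

/-- Gromov product form of the four-point condition (doubled products). -/
lemma hyp_prod (hcl : Subgroup.closure S = ⊤)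
    (H4 : ∀ x y z w : G, wordDist S x y + wordDist S z w ≤
      max (wordDist S x z + wordDist S y w) (wordDist S x w + wordDist S y z) + δ)
    (x y z p : G) :
    min (wordDist S p x + wordDist S p z - wordDist S x z)
        (wordDist S p z + wordDist S p y - wordDist S z y) - δ
      ≤ wordDist S p x + wordDist S p y - wordDist S x y := by
  have h := H4 x y z p
  have s1 : wordDist S z p = wordDist S p z := wd_symm hcl z p
  have s2 : wordDist S y p = wordDist S p y := wd_symm hcl y p
  have s3 : wordDist S x p = wordDist S p x := wd_symm hcl x p
  have s4 : wordDist S y z = wordDist S z y := wd_symm hcl y z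
  rcases max_cases (wordDist S x z + wordDist S y p) (wordDist S x p + wordDist S y z)
    with ⟨hm, -⟩ | ⟨hm, -⟩ <;> rw [hm] at h
  · calc min _ _ - δ ≤ (wordDist S p x + wordDist S p z - wordDist S x z) - δ := by
          have := min_le_left (wordDist S p x + wordDist S p z - wordDist S x z)
            (wordDist S p z + wordDist S p y - wordDist S z y)
          linarith
        _ ≤ _ := by linarith
  · calc min _ _ - δ ≤ (wordDist S p z + wordDist S p y - wordDist S z y) - δ := by
          have := min_le_right (wordDist S p x + wordDist S p z - wordDist S x z)
            (wordDist S p z + wordDist S p y - wordDist S z y)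
          linarith
        _ ≤ _ := by linarith

/-- In a torsion hyperbolic group, `ℓ(g²) ≤ ℓ(g) + δ` for every `g`. -/
lemma sq_short (hcl : Subgroup.closure S = ⊤) (hδ : 0 ≤ δ)
    (H4 : ∀ x y z w : G, wordDist S x y + wordDist S z w ≤
      max (wordDist S x z + wordDist S y w) (wordDist S x w + wordDist S y z) + δ)
    (htors : ∀ g : G, IsOfFinOrder g) (g : G) :
    (wordLength S (g * g) : ℝ) ≤ (wordLength S g : ℝ) + δ := by
  by_contra hcon
  push_neg at hcon
  set L : ℝ := (wordLength S g : ℝ) with hL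
  set M : ℝ := (wordLength S (g * g) : ℝ) with hM
  set K : ℝ := 2 * L - M with hK
  have hLK : K + δ < L := by rw [hK]; linarith
  have dpow : ∀ i : ℕ, wordDist S (g ^ (i + 2)) (g ^ (i + 1)) = L := by
    intro i
    rw [wd_eq, show (g ^ (i + 2))⁻¹ * g ^ (i + 1) = g⁻¹ by rw [pow_succ]; group,
      wl_inv hcl]
  have dpow1 : ∀ i : ℕ, wordDist S (g ^ i) (g ^ (i + 1)) = L := by
    intro i
    rw [wd_eq, show (g ^ i)⁻¹ * g ^ (i + 1) = g by rw [pow_succ]; group]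
  have dpow2 : ∀ i : ℕ, wordDist S (g ^ i) (g ^ (i + 2)) = M := by
    intro i
    rw [wd_eq, show (g ^ i)⁻¹ * g ^ (i + 2) = g * g by rw [pow_add, pow_two, inv_mul_cancel_left]]
  have hone : ∀ i : ℕ, wordDist S (g ^ i) 1 = (wordLength S (g ^ i) : ℝ) := by
    intro i
    rw [wd_eq, mul_one, wl_inv hcl]
  have hone' : ∀ i : ℕ, wordDist S 1 (g ^ i) = (wordLength S (g ^ i) : ℝ) := by
    intro i
    rw [wd_eq, inv_one, one_mul]
  have claimQ : ∀ i : ℕ,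
      (wordLength S (g ^ (i + 1)) : ℝ) + L - (wordLength S (g ^ (i + 2)) : ℝ) ≤ K + δ := by
    intro i
    induction i with
    | zero =>
        have h1 : g ^ (0 + 1) = g := by norm_num
        have h2 : g ^ (0 + 2) = g * g := by rw [show (0:ℕ) + 2 = 2 by rfl, pow_two]
        rw [h1, h2, ← hL, ← hM]
        linarith
    | succ i ih =>
        have hp := hyp_prod hcl H4 (g ^ (i + 1)) (g ^ (i + 3)) 1 (g ^ (i + 2))
        have e1 : wordDist S (g ^ (i + 2)) (g ^ (i + 1)) = L := dpow i
        have e2 : wordDist S (g ^ (i + 2)) (g ^ (i + 3)) = L := dpow1 (i + 2)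
        have e3 : wordDist S (g ^ (i + 1)) (g ^ (i + 3)) = M := dpow2 (i + 1)
        have e4 : wordDist S (g ^ (i + 2)) 1 = (wordLength S (g ^ (i + 2)) : ℝ) := hone _
        have e5 : wordDist S (g ^ (i + 1)) 1 = (wordLength S (g ^ (i + 1)) : ℝ) := hone _
        have e6 : wordDist S 1 (g ^ (i + 3)) = (wordLength S (g ^ (i + 3)) : ℝ) := hone' _
        rw [e1, e2, e3, e4, e5, e6] at hp
        have hA : K + δ < L + (wordLength S (g ^ (i + 2)) : ℝ)
            - (wordLength S (g ^ (i + 1)) : ℝ) := by linarith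
        rcases min_cases
          (L + (wordLength S (g ^ (i + 2)) : ℝ) - (wordLength S (g ^ (i + 1)) : ℝ))
          ((wordLength S (g ^ (i + 2)) : ℝ) + L - (wordLength S (g ^ (i + 3)) : ℝ))
          with ⟨hm, hcmp⟩ | ⟨hm, hcmp⟩ <;> rw [hm] at hp <;> linarith
  have claimLen : ∀ i : ℕ, L + i * (L - K - δ) ≤ (wordLength S (g ^ (i + 1)) : ℝ) := by
    intro i
    induction i with
    | zero => simp [hL]
    | succ i ih =>
        have := claimQ i
        push_cast
        push_cast at ih
        linarith
  have hn : 0 < orderOf g := (htors g).orderOf_pos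
  have hgn : g ^ (orderOf g + 1) = g := by
    rw [pow_succ, pow_orderOf_eq_one, one_mul]
  have := claimLen (orderOf g)
  rw [hgn] at this
  have hcast : (1 : ℝ) ≤ (orderOf g : ℝ) := by exact_mod_cast hn
  nlinarith

end THF

namespace THF
variable {G : Type*} [Group G] {S : Set G} {δ : ℝ}

/-- Reflection lemma: if `p` and `q` are points on geodesics to `x` at times `t` and
`s = ℓ(x) - t` with `s ≤ t`, then `x·q` is close to `p`. -/
lemma refl_lemma (hcl : Subgroup.closure S = ⊤) (hδ : 0 ≤ δ)
    (H4 : ∀ x y z w : G, wordDist S x y + wordDist S z w ≤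
      max (wordDist S x z + wordDist S y w) (wordDist S x w + wordDist S y z) + δ)
    (htors : ∀ g : G, IsOfFinOrder g)
    (x p q : G) (s t : ℕ) (hst : s ≤ t)
    (hx : wordLength S x = s + t) (hp : wordLength S p = t)
    (hpx : wordLength S (p⁻¹ * x) = s)
    (hq : wordLength S q = s) (hqx : wordLength S (q⁻¹ * x) = t) :
    (wordLength S (p⁻¹ * (x * q)) : ℝ) ≤ 3 * δ := by
  have dxp : wordDist S x p = (s : ℝ) := by
    rw [wd_eq, show x⁻¹ * p = (p⁻¹ * x)⁻¹ by group, wl_inv hcl, hpx]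
  have dx1 : wordDist S x 1 = (s : ℝ) + t := by
    rw [wd_eq, mul_one, wl_inv hcl, hx]; push_cast; ring
  have dxxx : wordDist S x (x * x) = (s : ℝ) + t := by
    rw [wd_eq, show x⁻¹ * (x * x) = x by group, hx]; push_cast; ring
  have d1xx : wordDist S 1 (x * x) ≤ (s : ℝ) + t + δ := by
    rw [wd_eq, inv_one, one_mul]
    have := sq_short hcl hδ H4 htors x
    rw [hx] at this
    push_cast at this ⊢
    linarith
  have d1xxpos : 0 ≤ wordDist S 1 (x * x) := wd_nonneg _ _
  have dp1 : wordDist S p 1 = (t : ℝ) := by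
    rw [wd_eq, mul_one, wl_inv hcl, hp]
  have dxxq : wordDist S x (x * q) = (s : ℝ) := by
    rw [wd_eq, show x⁻¹ * (x * q) = q by group, hq]
  have dxqxx : wordDist S (x * x) (x * q) = (t : ℝ) := by
    rw [wd_symm hcl, wd_eq, show (x * q)⁻¹ * (x * x) = q⁻¹ * x by group, hqx]
  have h1 := hyp_prod hcl H4 1 (x * q) (x * x) x
  rw [dx1, dxxx, dxxq, dxqxx] at h1
  have h2 := hyp_prod hcl H4 p (x * q) 1 x
  rw [dxp, dx1, dp1, dxxq] at h2
  have hw1 : wordDist S 1 (x * q) ≥ 0 := wd_nonneg _ _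
  have hmin1 : (2*(s:ℝ) - δ) ≤ min ((s:ℝ) + t + ((s:ℝ) + t) - wordDist S 1 (x * x)) ((s:ℝ) + t + (s:ℝ) - (t:ℝ)) := by
    apply le_min
    · have hts : (s:ℝ) ≤ (t:ℝ) := by exact_mod_cast hst
      linarith
    · linarith
  have hb1 : wordDist S 1 (x * q) ≤ (t : ℝ) + 2 * δ := by
    have := le_trans (by linarith : 2*(s:ℝ) - δ - δ ≤ min ((s:ℝ) + t + ((s:ℝ) + t) - wordDist S 1 (x * x)) ((s:ℝ) + t + (s:ℝ) - (t:ℝ)) - δ) h1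
    linarith
  have hmin2 : (2*(s:ℝ) - 2*δ) ≤ min ((s:ℝ) + ((s:ℝ) + t) - (t:ℝ)) ((s:ℝ) + t + (s:ℝ) - wordDist S 1 (x * q)) := by
    apply le_min
    · linarith
    · linarith
  have goal' : wordDist S p (x * q) ≤ 3 * δ := by
    have := le_trans (by linarith : 2*(s:ℝ) - 2*δ - δ ≤ min ((s:ℝ) + ((s:ℝ) + t) - (t:ℝ)) ((s:ℝ) + t + (s:ℝ) - wordDist S 1 (x * q)) - δ) h2
    linarith
  rw [wd_eq] at goal'
  exact goal'

end THF

namespace THF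
variable {G : Type*} [Group G] {S : Set G} {δ : ℝ}

lemma main_contra (hS : S.Finite) (hcl : Subgroup.closure S = ⊤) (hδ : 0 ≤ δ)
    (H4 : ∀ x y z w : G, wordDist S x y + wordDist S z w ≤
      max (wordDist S x z + wordDist S y w) (wordDist S x w + wordDist S y z) + δ)
    (htors : ∀ g : G, IsOfFinOrder g) (hinf : Infinite G) : False := by
  classical
  set γ : ℕ → G := fun n => (ray S hS hcl hinf n).1 with hγ
  have hlen : ∀ n, wordLength S (γ n) = n := fun n => ray_len hS hcl hinf n
  have hdist : ∀ n k : ℕ, wordLength S ((γ n)⁻¹ * γ (n + k)) = k :=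
    fun n k => ray_dist hS hcl hinf n k
  -- reflection along the ray
  have W1 : ∀ t u : ℕ, t ≤ u →
      (wordLength S ((γ u)⁻¹ * (γ (t + u) * γ t)) : ℝ) ≤ 3 * δ := by
    intro t u htu
    refine refl_lemma hcl hδ H4 htors (γ (t + u)) (γ u) (γ t) t u htu
      (hlen _) (hlen _) ?_ (hlen _) ?_
    · have := hdist u t
      rwa [show u + t = t + u by omega] at this
    · exact hdist t u
  obtain ⟨N, hNδ⟩ : ∃ N : ℕ, 19 * δ < (N : ℝ) :=
    ⟨⌊19 * δ⌋₊ + 1, by push_cast; exact Nat.lt_floor_add_one _⟩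
  set g : G := γ (6 * N) * (γ (4 * N))⁻¹ with hg
  -- bound A1 : d(γ(4N), g·γ(2N)) ≤ 6δ
  have hu1 : (wordLength S ((γ (4 * N))⁻¹ * (γ (6 * N) * γ (2 * N))) : ℝ) ≤ 3 * δ := by
    have := W1 (2 * N) (4 * N) (by omega)
    rwa [show 2 * N + 4 * N = 6 * N by omega] at this
  have hu2 : (wordLength S ((γ (2 * N))⁻¹ * (γ (4 * N) * γ (2 * N))) : ℝ) ≤ 3 * δ := by
    have := W1 (2 * N) (2 * N) (by omega)
    rwa [show 2 * N + 2 * N = 4 * N by omega] at this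
  have hA1 : (wordLength S ((γ (4 * N))⁻¹ * (g * γ (2 * N))) : ℝ) ≤ 6 * δ := by
    have hsplit : (γ (4 * N))⁻¹ * (g * γ (2 * N))
        = ((γ (4 * N))⁻¹ * (γ (6 * N) * γ (2 * N)))
          * ((γ (2 * N))⁻¹ * (γ (4 * N) * γ (2 * N)))⁻¹ := by
      rw [hg]; group
    have hm := wl_mul hcl ((γ (4 * N))⁻¹ * (γ (6 * N) * γ (2 * N)))
      (((γ (2 * N))⁻¹ * (γ (4 * N) * γ (2 * N)))⁻¹)
    rw [← hsplit, wl_inv hcl] at hm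
    have hm' : (wordLength S ((γ (4 * N))⁻¹ * (g * γ (2 * N))) : ℝ)
        ≤ (wordLength S ((γ (4 * N))⁻¹ * (γ (6 * N) * γ (2 * N))) : ℝ)
          + (wordLength S ((γ (2 * N))⁻¹ * (γ (4 * N) * γ (2 * N))) : ℝ) := by
      exact_mod_cast hm
    linarith
  set h : G := (γ (2 * N))⁻¹ * g * γ (2 * N) with hh
  -- upper bound on ℓ(h)
  have hhup : (wordLength S h : ℝ) ≤ 2 * N + 6 * δ := by
    have hsplit : h = ((γ (2 * N))⁻¹ * γ (4 * N))
        * ((γ (4 * N))⁻¹ * (g * γ (2 * N))) := by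
      rw [hh]; group
    have hm := wl_mul hcl ((γ (2 * N))⁻¹ * γ (4 * N)) ((γ (4 * N))⁻¹ * (g * γ (2 * N)))
    rw [← hsplit] at hm
    have hd24 : wordLength S ((γ (2 * N))⁻¹ * γ (4 * N)) = 2 * N := by
      have := hdist (2 * N) (2 * N)
      rwa [show 2 * N + 2 * N = 4 * N by omega] at this
    have hm2 : (wordLength S h : ℝ)
        ≤ (wordLength S ((γ (2 * N))⁻¹ * γ (4 * N)) : ℝ)
          + (wordLength S ((γ (4 * N))⁻¹ * (g * γ (2 * N))) : ℝ) := by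
      exact_mod_cast hm
    rw [hd24] at hm2
    push_cast at hm2
    linarith
  -- lower bound on ℓ(h²)
  have hglue : g * γ (4 * N) = γ (6 * N) := by rw [hg]; group
  have hhlow : 4 * (N : ℝ) - 6 * δ ≤ (wordLength S (h * h) : ℝ) := by
    have hd26 : wordLength S ((γ (2 * N))⁻¹ * γ (6 * N)) = 4 * N := by
      have := hdist (2 * N) (4 * N)
      rwa [show 2 * N + 4 * N = 6 * N by omega] at this
    have hsplit : (γ (2 * N))⁻¹ * γ (6 * N)
        = (h * h) * ((γ (4 * N))⁻¹ * (g * γ (2 * N)))⁻¹ := by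
      rw [hh, hg]; group
    have hm := wl_mul hcl (h * h) (((γ (4 * N))⁻¹ * (g * γ (2 * N)))⁻¹)
    rw [← hsplit, wl_inv hcl, hd26] at hm
    have hm' : 4 * (N : ℝ) ≤ (wordLength S (h * h) : ℝ)
        + (wordLength S ((γ (4 * N))⁻¹ * (g * γ (2 * N))) : ℝ) := by
      have : ((4 * N : ℕ) : ℝ) ≤ ((wordLength S (h * h)
          + wordLength S ((γ (4 * N))⁻¹ * (g * γ (2 * N))) : ℕ) : ℝ) := by
        exact_mod_cast hm
      push_cast at this
      linarith
    linarith
  have hsq := sq_short hcl hδ H4 htors h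
  linarith

end THF


/-- A torsion group is hyperbolic if and only if it is finite. -/
theorem torsion_hyperbolic_iff_finite (G : Type) [Group G]
    (htors : ∀ g : G, IsOfFinOrder g) :
    IsHyperbolicGroup G ↔ Finite G := by
  constructor
  · rintro ⟨S, hS, hcl, δ, hδ, H4⟩
    by_contra hfin
    exact THF.main_contra hS hcl hδ H4 htors (not_finite_iff_infinite.mp hfin)
  · intro hfin
    refine ⟨Set.univ, Set.finite_univ, Subgroup.closure_univ, 2, by norm_num, ?_⟩
    intro x y z w
    have hb : ∀ a b : G, wordDist Set.univ a b ≤ 1 := by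
      intro a b
      have : wordLength Set.univ (a⁻¹ * b) ≤ 1 :=
        THF.wl_letter_le_one (Or.inl (Set.mem_univ _))
      rw [wordDist]
      exact_mod_cast this
    have h0 : (0 : ℝ) ≤ wordDist Set.univ x z + wordDist Set.univ y w :=
      add_nonneg (THF.wd_nonneg _ _) (THF.wd_nonneg _ _)
    have hmax := le_max_left (wordDist Set.univ x z + wordDist Set.univ y w)
      (wordDist Set.univ x w + wordDist Set.univ y z)
    linarith [hb x y, hb z w]
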